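/- In U(g)^{⊗4}: [[C_{13} + C_{14}, σ̂_{12}], C_{34}] = 0 and [[C_{23} + C_{24}, σ̂_{12}], C_{34}] = 0. -/

import Mathlib

open scoped TensorProduct

set_option synthInstance.maxHeartbeats 1000000
set_option maxHeartbeats 1000000

noncomputable section

/-- `Σ i, u i ⊗ v i ⊗ 1 ⊗ 1` in `U(g)^{⊗4}`: factors in positions 1, 2. -/
def tensor4_12 (K : Type*) {L I : Type*} [Field K] [LieRing L] [LieAlgebra K L]
    [Fintype I] (u v : I → L) :
    UniversalEnvelopingAlgebra K L ⊗[K] (UniversalEnvelopingAlgebra K L ⊗[K]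
      (UniversalEnvelopingAlgebra K L ⊗[K] UniversalEnvelopingAlgebra K L)) :=
  ∑ i, UniversalEnvelopingAlgebra.ι K (u i) ⊗ₜ[K]
        (UniversalEnvelopingAlgebra.ι K (v i) ⊗ₜ[K]
          ((1 : UniversalEnvelopingAlgebra K L) ⊗ₜ[K] (1 : UniversalEnvelopingAlgebra K L)))

/-- `Σ i, u i ⊗ 1 ⊗ v i ⊗ 1`: factors in positions 1, 3. -/
def tensor4_13 (K : Type*) {L I : Type*} [Field K] [LieRing L] [LieAlgebra K L]
    [Fintype I] (u v : I → L) :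
    UniversalEnvelopingAlgebra K L ⊗[K] (UniversalEnvelopingAlgebra K L ⊗[K]
      (UniversalEnvelopingAlgebra K L ⊗[K] UniversalEnvelopingAlgebra K L)) :=
  ∑ i, UniversalEnvelopingAlgebra.ι K (u i) ⊗ₜ[K]
        ((1 : UniversalEnvelopingAlgebra K L) ⊗ₜ[K]
          (UniversalEnvelopingAlgebra.ι K (v i) ⊗ₜ[K] (1 : UniversalEnvelopingAlgebra K L)))

/-- `Σ i, u i ⊗ 1 ⊗ 1 ⊗ v i`: factors in positions 1, 4. -/
def tensor4_14 (K : Type*) {L I : Type*} [Field K] [LieRing L] [LieAlgebra K L]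
    [Fintype I] (u v : I → L) :
    UniversalEnvelopingAlgebra K L ⊗[K] (UniversalEnvelopingAlgebra K L ⊗[K]
      (UniversalEnvelopingAlgebra K L ⊗[K] UniversalEnvelopingAlgebra K L)) :=
  ∑ i, UniversalEnvelopingAlgebra.ι K (u i) ⊗ₜ[K]
        ((1 : UniversalEnvelopingAlgebra K L) ⊗ₜ[K]
          ((1 : UniversalEnvelopingAlgebra K L) ⊗ₜ[K] UniversalEnvelopingAlgebra.ι K (v i)))

/-- `Σ i, 1 ⊗ u i ⊗ v i ⊗ 1`: factors in positions 2, 3. -/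
def tensor4_23 (K : Type*) {L I : Type*} [Field K] [LieRing L] [LieAlgebra K L]
    [Fintype I] (u v : I → L) :
    UniversalEnvelopingAlgebra K L ⊗[K] (UniversalEnvelopingAlgebra K L ⊗[K]
      (UniversalEnvelopingAlgebra K L ⊗[K] UniversalEnvelopingAlgebra K L)) :=
  ∑ i, (1 : UniversalEnvelopingAlgebra K L) ⊗ₜ[K]
        (UniversalEnvelopingAlgebra.ι K (u i) ⊗ₜ[K]
          (UniversalEnvelopingAlgebra.ι K (v i) ⊗ₜ[K] (1 : UniversalEnvelopingAlgebra K L)))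

/-- `Σ i, 1 ⊗ u i ⊗ 1 ⊗ v i`: factors in positions 2, 4. -/
def tensor4_24 (K : Type*) {L I : Type*} [Field K] [LieRing L] [LieAlgebra K L]
    [Fintype I] (u v : I → L) :
    UniversalEnvelopingAlgebra K L ⊗[K] (UniversalEnvelopingAlgebra K L ⊗[K]
      (UniversalEnvelopingAlgebra K L ⊗[K] UniversalEnvelopingAlgebra K L)) :=
  ∑ i, (1 : UniversalEnvelopingAlgebra K L) ⊗ₜ[K]
        (UniversalEnvelopingAlgebra.ι K (u i) ⊗ₜ[K]
          ((1 : UniversalEnvelopingAlgebra K L) ⊗ₜ[K] UniversalEnvelopingAlgebra.ι K (v i)))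

/-- `Σ i, 1 ⊗ 1 ⊗ u i ⊗ v i`: factors in positions 3, 4. -/
def tensor4_34 (K : Type*) {L I : Type*} [Field K] [LieRing L] [LieAlgebra K L]
    [Fintype I] (u v : I → L) :
    UniversalEnvelopingAlgebra K L ⊗[K] (UniversalEnvelopingAlgebra K L ⊗[K]
      (UniversalEnvelopingAlgebra K L ⊗[K] UniversalEnvelopingAlgebra K L)) :=
  ∑ i, (1 : UniversalEnvelopingAlgebra K L) ⊗ₜ[K]
        ((1 : UniversalEnvelopingAlgebra K L) ⊗ₜ[K]
          (UniversalEnvelopingAlgebra.ι K (u i) ⊗ₜ[K] UniversalEnvelopingAlgebra.ι K (v i)))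

set_option synthInstance.maxHeartbeats 1000000
set_option maxHeartbeats 1000000

section Helpers

variable {K L I : Type*} [Field K] [LieRing L] [LieAlgebra K L] [Fintype I]

local notation "U" => UniversalEnvelopingAlgebra K L
local notation "UI" => UniversalEnvelopingAlgebra.ι K
local notation "T4" => UniversalEnvelopingAlgebra K L ⊗[K] (UniversalEnvelopingAlgebra K L ⊗[K]
      (UniversalEnvelopingAlgebra K L ⊗[K] UniversalEnvelopingAlgebra K L))
local notation "T2" => UniversalEnvelopingAlgebra K L ⊗[K] UniversalEnvelopingAlgebra K L

lemma csum_lie4 {α : Type*} (s : Finset α) (x : T4) (f : α → T4) :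
    ⁅∑ i ∈ s, f i, x⁆ = ∑ i ∈ s, ⁅f i, x⁆ := by
  rw [Ring.lie_def]
  have h1 : (∑ i ∈ s, f i) * x = ∑ i ∈ s, f i * x := map_sum (AddMonoidHom.mulRight x) f s
  have h2 : x * (∑ i ∈ s, f i) = ∑ i ∈ s, x * f i := map_sum (AddMonoidHom.mulLeft x) f s
  rw [h1, h2]
  have h3 : ∑ i ∈ s, ⁅f i, x⁆ = ∑ i ∈ s, (f i * x - x * f i) :=
    Finset.sum_congr rfl fun i _ => Ring.lie_def _ _
  rw [h3]
  exact (Finset.sum_sub_distrib (f := fun i => f i * x) (g := fun i => x * f i)).symm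

lemma clie_sum4 {α : Type*} (s : Finset α) (x : T4) (f : α → T4) :
    ⁅x, ∑ i ∈ s, f i⁆ = ∑ i ∈ s, ⁅x, f i⁆ := by
  rw [Ring.lie_def]
  have h1 : (∑ i ∈ s, f i) * x = ∑ i ∈ s, f i * x := map_sum (AddMonoidHom.mulRight x) f s
  have h2 : x * (∑ i ∈ s, f i) = ∑ i ∈ s, x * f i := map_sum (AddMonoidHom.mulLeft x) f s
  rw [h1, h2]
  have h3 : ∑ i ∈ s, ⁅x, f i⁆ = ∑ i ∈ s, (x * f i - f i * x) :=
    Finset.sum_congr rfl fun i _ => Ring.lie_def _ _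
  rw [h3]
  exact (Finset.sum_sub_distrib (f := fun i => x * f i) (g := fun i => f i * x)).symm

lemma cadd_lie4 (x y m : T4) : ⁅x + y, m⁆ = ⁅x, m⁆ + ⁅y, m⁆ := by
  rw [Ring.lie_def, Ring.lie_def, Ring.lie_def]
  have h1 : (x + y) * m = x * m + y * m := map_add (AddMonoidHom.mulRight m) x y
  have h2 : m * (x + y) = m * x + m * y := map_add (AddMonoidHom.mulLeft m) x y
  rw [h1, h2]
  exact add_sub_add_comm (x * m) (y * m) (m * x) (m * y)

lemma clie_sum2 {α : Type*} (s : Finset α) (x : T2) (f : α → T2) :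
    ⁅x, ∑ i ∈ s, f i⁆ = ∑ i ∈ s, ⁅x, f i⁆ := by
  rw [Ring.lie_def]
  have h1 : (∑ i ∈ s, f i) * x = ∑ i ∈ s, f i * x := map_sum (AddMonoidHom.mulRight x) f s
  have h2 : x * (∑ i ∈ s, f i) = ∑ i ∈ s, x * f i := map_sum (AddMonoidHom.mulLeft x) f s
  rw [h1, h2]
  have h3 : ∑ i ∈ s, ⁅x, f i⁆ = ∑ i ∈ s, (x * f i - f i * x) :=
    Finset.sum_congr rfl fun i _ => Ring.lie_def _ _
  rw [h3]
  exact (Finset.sum_sub_distrib (f := fun i => x * f i) (g := fun i => f i * x)).symm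

lemma cadd_lie2 (x y m : T2) : ⁅x + y, m⁆ = ⁅x, m⁆ + ⁅y, m⁆ := by
  rw [Ring.lie_def, Ring.lie_def, Ring.lie_def]
  have h1 : (x + y) * m = x * m + y * m := map_add (AddMonoidHom.mulRight m) x y
  have h2 : m * (x + y) = m * x + m * y := map_add (AddMonoidHom.mulLeft m) x y
  rw [h1, h2]
  exact add_sub_add_comm (x * m) (y * m) (m * x) (m * y)

lemma csum_lie_sum4 {α β : Type*} (s : Finset α) (t : Finset β) (f : α → T4) (g : β → T4) :
    ⁅∑ i ∈ s, f i, ∑ j ∈ t, g j⁆ = ∑ i ∈ s, ∑ j ∈ t, ⁅f i, g j⁆ := by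
  rw [csum_lie4]
  exact Finset.sum_congr rfl fun i _ => clie_sum4 t (f i) g

lemma lie2_left (x c d : U) :
    ⁅(x ⊗ₜ[K] (1:U) : T2), c ⊗ₜ[K] d⁆ = ⁅x, c⁆ ⊗ₜ[K] d := by
  simp [Ring.lie_def, Algebra.TensorProduct.tmul_mul_tmul, TensorProduct.sub_tmul]

lemma lie2_right (x c d : U) :
    ⁅((1:U) ⊗ₜ[K] x : T2), c ⊗ₜ[K] d⁆ = c ⊗ₜ[K] ⁅x, d⁆ := by
  simp [Ring.lie_def, Algebra.TensorProduct.tmul_mul_tmul, TensorProduct.tmul_sub]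

lemma lie4_1 (x x' b : U) (m : T2) :
    ⁅(x ⊗ₜ[K] ((1:U) ⊗ₜ[K] m) : T4),
      x' ⊗ₜ[K] (b ⊗ₜ[K] ((1:U) ⊗ₜ[K] (1:U)))⁆
      = ⁅x, x'⁆ ⊗ₜ[K] (b ⊗ₜ[K] m) := by
  have h1 : ((1:U) ⊗ₜ[K] (1:U) : T2) = 1 := rfl
  simp [h1, Ring.lie_def, Algebra.TensorProduct.tmul_mul_tmul, TensorProduct.sub_tmul]

lemma lie4_2 (x x' b : U) (m : T2) :
    ⁅((1:U) ⊗ₜ[K] (x ⊗ₜ[K] m) : T4),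
      x' ⊗ₜ[K] (b ⊗ₜ[K] ((1:U) ⊗ₜ[K] (1:U)))⁆
      = x' ⊗ₜ[K] (⁅x, b⁆ ⊗ₜ[K] m) := by
  have h1 : ((1:U) ⊗ₜ[K] (1:U) : T2) = 1 := rfl
  simp [h1, Ring.lie_def, Algebra.TensorProduct.tmul_mul_tmul, TensorProduct.tmul_sub,
    TensorProduct.sub_tmul]

lemma lie4_34 (a b : U) (m n : T2) :
    ⁅(a ⊗ₜ[K] (b ⊗ₜ[K] m) : T4),
      (1:U) ⊗ₜ[K] ((1:U) ⊗ₜ[K] n)⁆ = a ⊗ₜ[K] (b ⊗ₜ[K] ⁅m, n⁆) := by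
  simp [Ring.lie_def, Algebra.TensorProduct.tmul_mul_tmul, TensorProduct.tmul_sub]

end Helpers
section Key

variable {K L I : Type*} [Field K] [LieRing L] [LieAlgebra K L]
  [Fintype I] [DecidableEq I] (B : LinearMap.BilinForm K L)
  (hBsymm : ∀ x y, B x y = B y x)
  (hBinv : ∀ x y z, B ⁅x, y⁆ z = B x ⁅y, z⁆)
  (hBnd : B.Nondegenerate)
  (e : Module.Basis I K L) (e' : I → L)
  (hdual : ∀ i j, B (e i) (e' j) = if i = j then 1 else 0)

include hdual in
lemma expand_left (y : L) : ∑ j, B y (e' j) • e j = y := by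
  have h : ∀ j, B y (e' j) = e.repr y j := by
    intro j
    conv_lhs => rw [← e.sum_repr y]
    simp [-Module.Basis.sum_repr, hdual, Finset.sum_ite_eq']
  simp only [h]
  exact e.sum_repr y

include hBsymm hBnd hdual in
lemma expand_right (y : L) : ∑ j, B (e j) y • e' j = y := by
  set z := ∑ j, B (e j) y • e' j with hz
  have hi : ∀ i, B (e i) (z - y) = 0 := by
    intro i
    have h1 : B (e i) z = B (e i) y := by
      rw [hz]
      simp [hdual, Finset.sum_ite_eq, mul_comm]
    simp [h1]
  have h0 : z - y = 0 := by
    apply hBnd.1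
    intro n
    rw [hBsymm]
    conv_lhs => rw [← expand_left B e e' hdual n]
    simp [hi]
  rw [sub_eq_zero] at h0
  exact h0

include hBsymm hBinv hBnd hdual in
lemma key_sum (x : L) :
    (∑ k, (⁅x, e k⁆ ⊗ₜ[K] e' k + e k ⊗ₜ[K] ⁅x, e' k⁆) : L ⊗[K] L) = 0 := by
  have h1 : (∑ k, (⁅x, e k⁆ ⊗ₜ[K] e' k : L ⊗[K] L))
      = ∑ k, ∑ j, B ⁅x, e k⁆ (e' j) • (e j ⊗ₜ[K] e' k) := by
    refine Finset.sum_congr rfl fun k _ => ?_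
    conv_lhs => rw [← expand_left B e e' hdual ⁅x, e k⁆]
    rw [TensorProduct.sum_tmul]
    exact Finset.sum_congr rfl fun j _ => by rw [TensorProduct.smul_tmul']
  have h2 : (∑ k, (e k ⊗ₜ[K] ⁅x, e' k⁆ : L ⊗[K] L))
      = ∑ k, ∑ j, B (e k) ⁅x, e' j⁆ • (e j ⊗ₜ[K] e' k) := by
    have : (∑ k, (e k ⊗ₜ[K] ⁅x, e' k⁆ : L ⊗[K] L))
        = ∑ k, ∑ j, B (e j) ⁅x, e' k⁆ • (e k ⊗ₜ[K] e' j) := by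
      refine Finset.sum_congr rfl fun k _ => ?_
      conv_lhs => rw [← expand_right B hBsymm hBnd e e' hdual ⁅x, e' k⁆]
      rw [TensorProduct.tmul_sum]
      exact Finset.sum_congr rfl fun j _ => by rw [TensorProduct.tmul_smul]
    rw [this, Finset.sum_comm]
  rw [Finset.sum_add_distrib, h1, h2, ← Finset.sum_add_distrib]
  refine Finset.sum_eq_zero fun k _ => ?_
  rw [← Finset.sum_add_distrib]
  refine Finset.sum_eq_zero fun j _ => ?_
  rw [← add_smul]
  have : B ⁅x, e k⁆ (e' j) + B (e k) ⁅x, e' j⁆ = 0 := by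
    have := hBinv (e k) x (e' j)
    rw [← lie_skew x (e k)]
    simp only [map_neg, LinearMap.neg_apply]
    rw [this]
    ring
  rw [this, zero_smul]
end Key

section Final

variable {K L I : Type*} [Field K] [LieRing L] [LieAlgebra K L] [Fintype I]

local notation "U" => UniversalEnvelopingAlgebra K L
local notation "UI" => UniversalEnvelopingAlgebra.ι K
local notation "T2" => UniversalEnvelopingAlgebra K L ⊗[K] UniversalEnvelopingAlgebra K L

lemma final_step (u v : I → L)
    (hkey : ∀ x : L, (∑ k, (UI ⁅x, u k⁆ ⊗ₜ[K] UI (v k)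
        + UI (u k) ⊗ₜ[K] UI ⁅x, v k⁆) : T2) = 0)
    (a b : I → I → U) :
    ⁅∑ i, ∑ j, a i j ⊗ₜ[K] (b i j ⊗ₜ[K]
        (UI (v i) ⊗ₜ[K] (1:U) + (1:U) ⊗ₜ[K] UI (v i))),
      tensor4_34 K u v⁆ = 0 := by
  have h34 : tensor4_34 K u v
      = (1:U) ⊗ₜ[K] ((1:U) ⊗ₜ[K] (∑ k, UI (u k) ⊗ₜ[K] UI (v k))) := by
    simp [tensor4_34, TensorProduct.tmul_sum]
  rw [h34, csum_lie4]
  refine Finset.sum_eq_zero fun i _ => ?_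
  rw [csum_lie4]
  refine Finset.sum_eq_zero fun j _ => ?_
  rw [lie4_34]
  have hz : ⁅(UI (v i) ⊗ₜ[K] (1:U) + (1:U) ⊗ₜ[K] UI (v i) : T2),
      ∑ k, UI (u k) ⊗ₜ[K] UI (v k)⁆ = 0 := by
    rw [cadd_lie2, clie_sum2, clie_sum2, ← Finset.sum_add_distrib, ← hkey (v i)]
    refine Finset.sum_congr rfl fun k _ => ?_
    letI := LieRing.ofAssociativeRing (A := U)
    rw [lie2_left, lie2_right, ← LieHom.map_lie, ← LieHom.map_lie]
  rw [hz, TensorProduct.tmul_zero, TensorProduct.tmul_zero]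

end Final

/-- In `U(g)^{⊗4}`: `[[C₁₃ + C₁₄, σ̂₁₂], C₃₄] = 0` and `[[C₂₃ + C₂₄, σ̂₁₂], C₃₄] = 0`. -/
theorem four_fold_identity_CC
    {K L I : Type*} [Field K] [CharZero K] [LieRing L] [LieAlgebra K L]
    [Module.Finite K L] [Fintype I] [DecidableEq I]
    (B : LinearMap.BilinForm K L)
    (hBsymm : ∀ x y, B x y = B y x)
    (hBinv : ∀ x y z, B ⁅x, y⁆ z = B x ⁅y, z⁆)
    (hBnd : B.Nondegenerate)
    (e : Module.Basis I K L) (e' : I → L)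
    (hdual : ∀ i j, B (e i) (e' j) = if i = j then 1 else 0)
    (σ : L →ₗ[K] L)
    (hσinv : ∀ x, σ (σ x) = x)
    (hσlie : ∀ x y, σ ⁅x, y⁆ = ⁅σ x, σ y⁆)
    (hσB : ∀ x y, B (σ x) (σ y) = B x y) :
    ⁅⁅tensor4_13 K (⇑e) e' + tensor4_14 K (⇑e) e',
        tensor4_12 K (fun i => σ (e i)) e'⁆, tensor4_34 K (⇑e) e'⁆ = 0 ∧
    ⁅⁅tensor4_23 K (⇑e) e' + tensor4_24 K (⇑e) e',
        tensor4_12 K (fun i => σ (e i)) e'⁆, tensor4_34 K (⇑e) e'⁆ = 0 := by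
  classical
  have hkey : ∀ x : L, (∑ k, (UniversalEnvelopingAlgebra.ι K ⁅x, e k⁆ ⊗ₜ[K]
        UniversalEnvelopingAlgebra.ι K (e' k)
      + UniversalEnvelopingAlgebra.ι K (e k) ⊗ₜ[K]
        UniversalEnvelopingAlgebra.ι K ⁅x, e' k⁆) :
      UniversalEnvelopingAlgebra K L ⊗[K] UniversalEnvelopingAlgebra K L) = 0 := by
    intro x
    have h := key_sum B hBsymm hBinv hBnd e e' hdual x
    letI := LieRing.ofAssociativeRing (A := UniversalEnvelopingAlgebra K L)
    have h2 := congrArg (TensorProduct.map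
      (UniversalEnvelopingAlgebra.ι (R := K) (L := L)).toLinearMap
      (UniversalEnvelopingAlgebra.ι (R := K) (L := L)).toLinearMap) h
    simpa [map_sum, TensorProduct.map_tmul] using h2
  constructor
  · have hA : ⁅tensor4_13 K (⇑e) e' + tensor4_14 K (⇑e) e',
        tensor4_12 K (fun i => σ (e i)) e'⁆
        = ∑ i, ∑ j, ⁅UniversalEnvelopingAlgebra.ι K (e i),
            UniversalEnvelopingAlgebra.ι K (σ (e j))⁆ ⊗ₜ[K]
            (UniversalEnvelopingAlgebra.ι K (e' j) ⊗ₜ[K]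
              (UniversalEnvelopingAlgebra.ι K (e' i) ⊗ₜ[K] (1 : UniversalEnvelopingAlgebra K L)
                + (1 : UniversalEnvelopingAlgebra K L) ⊗ₜ[K]
                  UniversalEnvelopingAlgebra.ι K (e' i))) := by
      rw [cadd_lie4]
      rw [tensor4_13, tensor4_14, tensor4_12, csum_lie_sum4, csum_lie_sum4,
        ← Finset.sum_add_distrib]
      refine Finset.sum_congr rfl fun i _ => ?_
      rw [← Finset.sum_add_distrib]
      refine Finset.sum_congr rfl fun j _ => ?_
      rw [lie4_1, lie4_1, ← TensorProduct.tmul_add, ← TensorProduct.tmul_add]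
    rw [hA]
    exact final_step (⇑e) e' hkey _ _
  · have hB : ⁅tensor4_23 K (⇑e) e' + tensor4_24 K (⇑e) e',
        tensor4_12 K (fun i => σ (e i)) e'⁆
        = ∑ i, ∑ j, UniversalEnvelopingAlgebra.ι K (σ (e j)) ⊗ₜ[K]
            (⁅UniversalEnvelopingAlgebra.ι K (e i),
              UniversalEnvelopingAlgebra.ι K (e' j)⁆ ⊗ₜ[K]
              (UniversalEnvelopingAlgebra.ι K (e' i) ⊗ₜ[K] (1 : UniversalEnvelopingAlgebra K L)
                + (1 : UniversalEnvelopingAlgebra K L) ⊗ₜ[K]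
                  UniversalEnvelopingAlgebra.ι K (e' i))) := by
      rw [cadd_lie4]
      rw [tensor4_23, tensor4_24, tensor4_12, csum_lie_sum4, csum_lie_sum4,
        ← Finset.sum_add_distrib]
      refine Finset.sum_congr rfl fun i _ => ?_
      rw [← Finset.sum_add_distrib]
      refine Finset.sum_congr rfl fun j _ => ?_
      rw [lie4_2, lie4_2, ← TensorProduct.tmul_add, ← TensorProduct.tmul_add]
    rw [hB]
    exact final_step (⇑e) e' hkey _ _
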